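/- arXiv:2308.07424 — 2 statements merged into one kernel-verified Lean document; each statement's English description precedes it below -/
import Mathlib

section
/- Let μ be a σ-finite measure on a measurable space 𝒳, T : 𝒳 → ℝ^p measurable, and p₀, p₁ : 𝒳 → [0,∞) measurable source joint densities with ∫(p₀+p₁)dμ = 1; set p(x) = p₀(x)+p₁(x) and η_i(x) = p_i(x)/p(x) on {p > 0}. Let q : 𝒳 → [0,∞) be a target marginal density with ∫ q dμ = 1 and q(x) = 0 μ-a.e. on {p = 0}. Fix parameters θ_i ∈ ℝ^p, α*_i ∈ ℝ (i ∈ {0,1}) and let N = ∫ Σ_{i∈{0,1}} p_i(x)·exp(θ_i·T(x) + α*_i) dμ, assumed to satisfy 0 < N < ∞; set α_i = α*_i − log N and r(x) = Σ_{i∈{0,1}} p_i(x)·exp(θ_i·T(x) + α_i). Assume ∫ q·log(q/p) dμ and ∫ q(x)·log(Σ_i η_i(x)·exp(θ_i·T(x)+α*_i)) dμ exist and are finite. Then (a) ∫ r dμ = 1 (the normalization constraint holds), and (b) the Kullback–Leibler divergence satisfies ∫ q·log(q/r) dμ = ∫ q·log(q/p) dμ − ( ∫ q(x)·log(Σ_{i∈{0,1}}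 η_i(x)·exp(θ_i·T(x)+α*_i)) dμ − log N ), where the first term on the right does not depend on (θ, α*). -/
open MeasureTheory

/-- For the normalized exponential tilt mixture
`r = ∑ i, p_i · exp(θ_i·T + α_i)` with `α_i = α*_i − log N`:
(a) `∫ r dμ = 1`, and (b) the KL divergence decomposition
`∫ q log(q/r) = ∫ q log(q/p) − (∫ q log(∑ η_i exp(θ_i·T+α*_i)) − log N)`. -/
theorem stmt_6 {X : Type*} [MeasurableSpace X] (μ : Measure X) [SigmaFinite μ]
    {d : ℕ} (T : X → Fin d → ℝ) (hT : Measurable T)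
    (p : Fin 2 → X → ℝ) (hp_meas : ∀ i, Measurable (p i)) (hp_nonneg : ∀ i x, 0 ≤ p i x)
    (hp_int : Integrable (fun x => p 0 x + p 1 x) μ)
    (hp_one : ∫ x, (p 0 x + p 1 x) ∂μ = 1)
    (q : X → ℝ) (hq_meas : Measurable q) (hq_nonneg : ∀ x, 0 ≤ q x)
    (hq_int : Integrable q μ) (hq_one : ∫ x, q x ∂μ = 1)
    (hq_ac : ∀ᵐ x ∂μ, p 0 x + p 1 x = 0 → q x = 0)
    (η : Fin 2 → X → ℝ) (hη : ∀ i x, η i x = p i x / (p 0 x + p 1 x))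
    (θ : Fin 2 → Fin d → ℝ) (αs : Fin 2 → ℝ)
    (N : ℝ)
    (hN_def : N = ∫ x, ∑ i, p i x * Real.exp ((∑ j, θ i j * T x j) + αs i) ∂μ)
    (hN_int : Integrable (fun x => ∑ i, p i x * Real.exp ((∑ j, θ i j * T x j) + αs i)) μ)
    (hN_pos : 0 < N)
    (α : Fin 2 → ℝ) (hα : ∀ i, α i = αs i - Real.log N)
    (r : X → ℝ)
    (hr : ∀ x, r x = ∑ i, p i x * Real.exp ((∑ j, θ i j * T x j) + α i))
    (hint_qp : Integrable (fun x => q x * Real.log (q x / (p 0 x + p 1 x))) μ)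
    (hint_qη : Integrable
      (fun x => q x * Real.log (∑ i, η i x * Real.exp ((∑ j, θ i j * T x j) + αs i))) μ) :
    (∫ x, r x ∂μ = 1) ∧
      ∫ x, q x * Real.log (q x / r x) ∂μ
        = (∫ x, q x * Real.log (q x / (p 0 x + p 1 x)) ∂μ)
          - ((∫ x, q x * Real.log
                (∑ i, η i x * Real.exp ((∑ j, θ i j * T x j) + αs i)) ∂μ)
              - Real.log N) := by

  have hNne : N ≠ 0 := hN_pos.ne'
  have hr' : ∀ x, r x =
      (∑ i, p i x * Real.exp ((∑ j, θ i j * T x j) + αs i)) / N := by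
    intro x
    rw [hr, Finset.sum_div]
    refine Finset.sum_congr rfl fun i _ => ?_
    rw [hα, show (∑ j, θ i j * T x j) + (αs i - Real.log N)
        = ((∑ j, θ i j * T x j) + αs i) - Real.log N by ring,
      Real.exp_sub, Real.exp_log hN_pos, mul_div_assoc]
  have ha : ∫ x, r x ∂μ = 1 := by
    simp_rw [hr']
    rw [integral_div, ← hN_def, div_self hNne]
  refine ⟨ha, ?_⟩
  have hae : ∀ᵐ x ∂μ,
      q x * Real.log (q x / r x)
        = q x * Real.log (q x / (p 0 x + p 1 x))
          - q x * Real.log (∑ i, η i x * Real.exp ((∑ j, θ i j * T x j) + αs i))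
          + q x * Real.log N := by
    filter_upwards [hq_ac] with x hx
    rcases eq_or_lt_of_le (hq_nonneg x) with hq0 | hqpos
    · simp [← hq0]
    · have hpne : p 0 x + p 1 x ≠ 0 := fun h => (hqpos.ne (hx h).symm).elim
      have hppos : 0 < p 0 x + p 1 x :=
        lt_of_le_of_ne (add_nonneg (hp_nonneg 0 x) (hp_nonneg 1 x)) (Ne.symm hpne)
      set A : ℝ := ∑ i, p i x * Real.exp ((∑ j, θ i j * T x j) + αs i) with hA
      have hApos : 0 < A := by
        rw [hA, Fin.sum_univ_two]
        rcases (or_iff_not_imp_left.2 fun h0 : ¬ 0 < p 0 x => by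
            have h0' : p 0 x = 0 := le_antisymm (not_lt.1 h0) (hp_nonneg 0 x)
            have : 0 < p 1 x := by
              by_contra h1
              exact hpne (by linarith [le_antisymm (not_lt.1 h1) (hp_nonneg 1 x)])
            exact this) with h0 | h1
        · exact add_pos_of_pos_of_nonneg (mul_pos h0 (Real.exp_pos _))
            (mul_nonneg (hp_nonneg 1 x) (Real.exp_pos _).le)
        · exact add_pos_of_nonneg_of_pos (mul_nonneg (hp_nonneg 0 x) (Real.exp_pos _).le)
            (mul_pos h1 (Real.exp_pos _))
      have hS : (∑ i, η i x * Real.exp ((∑ j, θ i j * T x j) + αs i))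
          = A / (p 0 x + p 1 x) := by
        simp only [hη, div_mul_eq_mul_div, ← Finset.sum_div, hA]
      have hrx : r x = A / N := hr' x
      rw [hrx, hS]
      rw [div_div_eq_mul_div, Real.log_div (by positivity) hApos.ne',
        Real.log_mul hqpos.ne' hNne, Real.log_div hqpos.ne' hpne,
        Real.log_div hApos.ne' hpne]
      ring
  have h1 := integral_add (hint_qp.sub hint_qη) (hq_int.mul_const (Real.log N)) (μ := μ)
  simp only [Pi.sub_apply] at h1
  rw [integral_congr_ae hae, h1, integral_sub hint_qp hint_qη,
    integral_mul_const, hq_one, one_mul]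
  ring
end

section
/- Let 𝒳 be a measurable space, T : 𝒳 → ℝ^p a measurable map, and p₀, p₁ : 𝒳 → [0,∞) source class-conditional joint densities. For each class i ∈ {0,1} suppose there is an anchor set 𝒮_i ⊆ 𝒳, i.e. p_i(x) > 0 and p_j(x) = 0 for j ≠ i for every x ∈ 𝒮_i, and suppose the affine span of T(𝒮_i) is all of ℝ^p (equivalently, the set {(T(x),1) : x ∈ 𝒮_i} spans ℝ^{p+1}). If two parameter families (θ_i, α_i)_{i∈{0,1}} and (θ'_i, α'_i)_{i∈{0,1}} in ℝ^p × ℝ satisfy Σ_{i∈{0,1}} p_i(x)·exp(θ_i·T(x) + α_i) = Σ_{i∈{0,1}} p_i(x)·exp(θ'_i·T(x) + α'_i) for every x ∈ 𝒳, then θ_i = θ'_i and α_i = α'_i for i ∈ {0,1}; i.e., the exponential tilt model is identifiable. -/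
open MeasureTheory

lemma affine_vanish_aux {d : ℕ} (c : Fin d → ℝ) (c0 : ℝ) (s : Set (Fin d → ℝ))
    (hs : affineSpan ℝ s = ⊤)
    (h : ∀ y ∈ s, (∑ j, c j * y j) + c0 = 0) :
    c = 0 ∧ c0 = 0 := by
  have hall : ∀ y : Fin d → ℝ, (∑ j, c j * y j) + c0 = 0 := by
    intro y
    have hy : y ∈ affineSpan ℝ s := by rw [hs]; trivial
    refine affineSpan_induction (p := fun z : Fin d → ℝ => (∑ j, c j * z j) + c0 = 0) hy h ?_
    intro a u v w hu hv hw
    have hsum : (∑ j, c j * (a • (u -ᵥ v) +ᵥ w) j)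
        = a * (∑ j, c j * u j) - a * (∑ j, c j * v j) + (∑ j, c j * w j) := by
      have step : ∀ j : Fin d, c j * (a • (u -ᵥ v) +ᵥ w) j
          = a * (c j * u j) - a * (c j * v j) + c j * w j := by
        intro j
        simp only [Pi.vadd_apply, Pi.smul_apply, Pi.sub_apply, Pi.add_apply, vsub_eq_sub, vadd_eq_add,
          smul_eq_mul]
        ring
      rw [Finset.sum_congr rfl fun j _ => step j, Finset.sum_add_distrib,
        Finset.sum_sub_distrib, ← Finset.mul_sum, ← Finset.mul_sum]
    rw [hsum]; linear_combination a * hu - a * hv + hw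
  have hc0 : c0 = 0 := by
    have := hall 0
    simpa using this
  refine ⟨funext fun k => ?_, hc0⟩
  have := hall (Pi.single k 1 : Fin d → ℝ)
  rw [hc0, add_zero] at this
  have hsum : (∑ j, c j * (Pi.single k 1 : Fin d → ℝ) j) = c k := by
    rw [Finset.sum_eq_single k]
    · simp
    · intro b _ hb
      simp [Pi.single_apply, hb]
    · simp
  rw [hsum] at this
  simpa using this

/-- Identifiability of the exponential tilt model: if each class has an anchor
set whose image under the sufficient statistic `T` affinely spans `ℝ^p`, then
the tilt parameters `(θ_i, α_i)` are uniquely determined by the tilted mixture. -/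
theorem stmt_8 {X : Type*} [MeasurableSpace X]
    {d : ℕ} (T : X → Fin d → ℝ) (hT : Measurable T)
    (p : Fin 2 → X → ℝ) (hp_nonneg : ∀ i x, 0 ≤ p i x)
    (S : Fin 2 → Set X)
    (hanchor : ∀ i, ∀ x ∈ S i, 0 < p i x ∧ ∀ j, j ≠ i → p j x = 0)
    (hspan : ∀ i, affineSpan ℝ (T '' S i) = ⊤)
    (θ θ' : Fin 2 → Fin d → ℝ) (α α' : Fin 2 → ℝ)
    (heq : ∀ x, ∑ i, p i x * Real.exp ((∑ j, θ i j * T x j) + α i)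
              = ∑ i, p i x * Real.exp ((∑ j, θ' i j * T x j) + α' i)) :
    θ = θ' ∧ α = α' := by
  have key : ∀ i, θ i = θ' i ∧ α i = α' i := by
    intro i
    have hvan : ∀ y ∈ T '' S i, (∑ j, (θ i j - θ' i j) * y j) + (α i - α' i) = 0 := by
      rintro y ⟨x, hx, rfl⟩
      obtain ⟨hpi, hpj⟩ := hanchor i x hx
      have hL : (∑ k, p k x * Real.exp ((∑ j, θ k j * T x j) + α k))
          = p i x * Real.exp ((∑ j, θ i j * T x j) + α i) :=
        Finset.sum_eq_single_of_mem i (Finset.mem_univ i)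
          (fun b _ hb => by rw [hpj b hb, zero_mul])
      have hR : (∑ k, p k x * Real.exp ((∑ j, θ' k j * T x j) + α' k))
          = p i x * Real.exp ((∑ j, θ' i j * T x j) + α' i) :=
        Finset.sum_eq_single_of_mem i (Finset.mem_univ i)
          (fun b _ hb => by rw [hpj b hb, zero_mul])
      have h := heq x
      rw [hL, hR] at h
      have hexp := mul_left_cancel₀ (ne_of_gt hpi) h
      have heqlin : (∑ j, θ i j * T x j) + α i = (∑ j, θ' i j * T x j) + α' i :=
        Real.exp_injective hexp
      have hsub : (∑ j, (θ i j - θ' i j) * T x j)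
          = (∑ j, θ i j * T x j) - (∑ j, θ' i j * T x j) := by
        rw [← Finset.sum_sub_distrib]
        exact Finset.sum_congr rfl fun j _ => by ring
      rw [hsub]; linarith
    obtain ⟨hc, hc0⟩ := affine_vanish_aux _ _ _ (hspan i) hvan
    constructor
    · funext j
      have := congrFun hc j
      simpa [sub_eq_zero] using this
    · linarith [hc0]
  exact ⟨funext fun i => (key i).1, funext fun i => (key i).2⟩
end
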